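/- As x ↓ 0, v' is of the exact order x^{−α}: lim_{x↓0} x^α v'(x) = β v(0+) > 0; moreover the candidate optimal consumption is dominated by x^α at the origin: lim_{x↓0} I(v'(x)) / x^α = 0. -/

import Mathlib

open Set Filter Topology

/-- If `f` has derivative `d` at `z` and `f t ≤ f z` for `t` in a left neighborhood,
then `d ≥ 0`. -/
lemma aux_left_deriv_nonneg {f : ℝ → ℝ} {d z y : ℝ} (hyz : y < z)
    (hd : HasDerivAt f d z) (h : ∀ t, y ≤ t → t < z → f t ≤ f z) : 0 ≤ d := by
  have hslope : Tendsto (slope f z) (𝓝[≠] z) (𝓝 d) := hasDerivAt_iff_tendsto_slope.1 hd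
  have h2 : Tendsto (slope f z) (𝓝[<] z) (𝓝 d) :=
    hslope.mono_left (nhdsWithin_mono _ (fun t ht => ne_of_lt ht))
  refine ge_of_tendsto h2 ?_
  filter_upwards [Ioo_mem_nhdsLT_of_mem (Set.mem_Ioc.2 ⟨hyz, le_refl z⟩)] with t ht
  have h1 : f t ≤ f z := h t ht.1.le ht.2
  have h3 : t - z < 0 := sub_neg.2 ht.2
  rw [slope_def_field]
  exact div_nonneg_of_nonpos (by linarith) h3.le

/-- Antitone function has nonpositive derivative. -/
lemma aux_deriv_nonpos_of_antitone {f : ℝ → ℝ} {d x : ℝ} (hx : 0 < x)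
    (hanti : AntitoneOn f (Ioi 0)) (hd : HasDerivAt f d x) : d ≤ 0 := by
  have hslope : Tendsto (slope f x) (𝓝[≠] x) (𝓝 d) := hasDerivAt_iff_tendsto_slope.1 hd
  have h2 : Tendsto (slope f x) (𝓝[>] x) (𝓝 d) :=
    hslope.mono_left (nhdsWithin_mono _ (fun t ht => ne_of_gt ht))
  refine le_of_tendsto h2 ?_
  filter_upwards [self_mem_nhdsWithin] with t ht
  have h1 : f t ≤ f x := hanti (mem_Ioi.2 hx) (mem_Ioi.2 (hx.trans ht)) (le_of_lt ht)
  have h3 : (0:ℝ) < t - x := sub_pos.2 ht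
  rw [slope_def_field]
  exact div_nonpos_of_nonpos_of_nonneg (by linarith) h3.le

/-- Once above a threshold, stays above to the left (if the derivative is negative whenever
at/above threshold). -/
lemma aux_stay_above {F F' : ℝ → ℝ} {T x₂ : ℝ} (hx₂ : 0 < x₂)
    (hd : ∀ x, 0 < x → HasDerivAt F (F' x) x)
    (hneg : ∀ z, 0 < z → z ≤ x₂ → T ≤ F z → F' z < 0)
    (hFx₂ : T ≤ F x₂) : ∀ x, 0 < x → x ≤ x₂ → T ≤ F x := by
  intro y hy hyx₂
  by_contra hlt
  push_neg at hlt
  have hyx₂' : y < x₂ := lt_of_le_of_ne hyx₂ (fun h => absurd hFx₂ (by rw [← h]; exact not_le.2 hlt))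
  have hFcont : ContinuousOn F (Icc y x₂) := fun t ht =>
    ((hd t (lt_of_lt_of_le hy ht.1)).continuousAt).continuousWithinAt
  set A := Icc y x₂ ∩ F ⁻¹' (Ici T) with hA
  have hAclosed : IsClosed A := hFcont.preimage_isClosed_of_isClosed isClosed_Icc isClosed_Ici
  have hAne : A.Nonempty := ⟨x₂, ⟨hyx₂'.le, le_refl _⟩, hFx₂⟩
  have hAbdd : BddBelow A := ⟨y, fun t ht => ht.1.1⟩
  set z := sInf A with hz
  have hzA : z ∈ A := hAclosed.csInf_mem hAne hAbdd
  have hyz : y < z := by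
    rcases lt_or_eq_of_le hzA.1.1 with h | h
    · exact h
    · exact absurd hzA.2 (by rw [← h]; exact not_le.2 hlt)
  have hzpos : 0 < z := hy.trans hyz
  have hleft : ∀ t, y ≤ t → t < z → F t ≤ F z := by
    intro t hty htz
    by_contra hFt
    push_neg at hFt
    have htA : t ∈ A := ⟨⟨hty, htz.le.trans hzA.1.2⟩, le_trans hzA.2 hFt.le⟩
    exact absurd (csInf_le hAbdd htA) (not_le.2 htz)
  have h0 : 0 ≤ F' z := aux_left_deriv_nonneg hyz (hd z hzpos) hleft
  exact absurd (hneg z hzpos hzA.1.2 hzA.2) (not_lt.2 h0)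

/-- Integrated comparison: if `f' ≤ g'` on `(0, b)` then `g x - g b ≤ f x - f b` ... -/
lemma aux_mono_comp {f g f' g' : ℝ → ℝ} {b : ℝ} (hb : 0 < b)
    (hf : ∀ x, 0 < x → HasDerivAt f (f' x) x)
    (hg : ∀ x, 0 < x → HasDerivAt g (g' x) x)
    (hle : ∀ x, 0 < x → x < b → f' x ≤ g' x) :
    ∀ x, 0 < x → x ≤ b → g x - g b ≤ f x - f b := by
  have hmono : MonotoneOn (fun x => g x - f x) (Ioc 0 b) := by
    apply monotoneOn_of_deriv_nonneg (convex_Ioc 0 b)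
    · exact fun t ht => (((hg t ht.1).sub (hf t ht.1)).continuousAt).continuousWithinAt
    · intro t ht
      rw [interior_Ioc] at ht
      exact ((hg t ht.1).sub (hf t ht.1)).differentiableAt.differentiableWithinAt
    · intro t ht
      rw [interior_Ioc] at ht
      rw [show (fun x => g x - f x) = g - f from rfl, ((hg t ht.1).sub (hf t ht.1)).deriv]
      exact sub_nonneg.2 (hle t ht.1 ht.2)
  intro x hx hxb
  have := hmono (Set.mem_Ioc.2 ⟨hx, hxb⟩) (Set.mem_Ioc.2 ⟨hb, le_refl b⟩) hxb
  simp only at this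
  linarith

/-- `A * x^(α-1) + B * log x → ∞` as `x → 0⁺` when `A > 0`, `α < 1`. -/
lemma aux_rpow_log_atTop {A B α : ℝ} (hA : 0 < A) (hα : α < 1) :
    Tendsto (fun x : ℝ => A * x ^ (α - 1) + B * Real.log x) (𝓝[>] (0:ℝ)) atTop := by
  have h1 : Tendsto (fun x : ℝ => x ^ (α - 1)) (𝓝[>] (0:ℝ)) atTop := by
    have hinv : Tendsto (fun x : ℝ => x⁻¹) (𝓝[>] (0:ℝ)) atTop := tendsto_inv_nhdsGT_zero
    have h2 : Tendsto (fun x : ℝ => (x⁻¹) ^ (1 - α)) (𝓝[>] (0:ℝ)) atTop :=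
      (tendsto_rpow_atTop (by linarith)).comp hinv
    refine h2.congr' ?_
    filter_upwards [self_mem_nhdsWithin] with x hx
    have hx0 : (0:ℝ) < x := hx
    rw [← Real.rpow_neg_one x, ← Real.rpow_mul hx0.le]
    congr 1; ring
  have h3 : Tendsto (fun x : ℝ => Real.log x * x ^ (1 - α)) (𝓝[>] (0:ℝ)) (𝓝 0) :=
    tendsto_log_mul_rpow_nhdsGT_zero (by linarith)
  have h4 : Tendsto (fun x : ℝ => A + B * (Real.log x * x ^ (1 - α))) (𝓝[>] (0:ℝ))
      (𝓝 (A + B * 0)) := tendsto_const_nhds.add (h3.const_mul B)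
  rw [mul_zero, add_zero] at h4
  have h5 := h1.atTop_mul_pos hA h4
  refine h5.congr' ?_
  filter_upwards [self_mem_nhdsWithin] with x hx
  have hx0 : (0:ℝ) < x := hx
  have hxx : x ^ (α - 1) * x ^ (1 - α) = 1 := by
    rw [← Real.rpow_add hx0]; norm_num
  rw [mul_comm (x ^ (α-1)) (x ^ (1-α))] at hxx
  calc x ^ (α - 1) * (A + B * (Real.log x * x ^ (1 - α)))
      = A * x ^ (α - 1) + B * Real.log x * (x ^ (1-α) * x ^ (α-1)) := by ring
    _ = A * x ^ (α - 1) + B * Real.log x := by rw [hxx, mul_one]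

set_option maxHeartbeats 2000000 in
/-- As `x ↓ 0`, `v'` is of the exact order `x^(−α)`: `x^α v'(x) → β v(0+) > 0`, and the
candidate optimal consumption is dominated by `x^α`: `I(v'(x))/x^α → 0`. -/
theorem hjb_solution_deriv_order_at_zero
    (α μ σ β : ℝ) (hα0 : 0 < α) (hα1 : α < 1) (hμ : 0 < μ) (hσ : 0 < σ) (hβ : 0 < β)
    (U U' U'' : ℝ → ℝ)
    (hUcont : ContinuousOn U (Ici 0)) (hU0 : U 0 = 0)
    (hU'deriv : ∀ y > (0 : ℝ), HasDerivAt U (U' y) y)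
    (hU''deriv : ∀ y > (0 : ℝ), HasDerivAt U' (U'' y) y)
    (hU''cont : ContinuousOn U'' (Ioi 0))
    (hU'pos : ∀ y > (0 : ℝ), 0 < U' y)
    (hU''neg : ∀ y > (0 : ℝ), U'' y < 0)
    (hU'0 : Tendsto U' (𝓝[>] 0) atTop)
    (hU'top : Tendsto U' atTop (𝓝 0))
    (I : ℝ → ℝ)
    (hIpos : ∀ p > (0 : ℝ), 0 < I p)
    (hIright : ∀ p > (0 : ℝ), U' (I p) = p)
    (hIleft : ∀ y > (0 : ℝ), I (U' y) = y)
    (v v' v'' : ℝ → ℝ)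
    (hv'deriv : ∀ x > (0 : ℝ), HasDerivAt v (v' x) x)
    (hv''deriv : ∀ x > (0 : ℝ), HasDerivAt v' (v'' x) x)
    (hv''cont : ContinuousOn v'' (Ioi 0))
    (hconc : ConcaveOn ℝ (Ioi 0) v)
    (hv'pos : ∀ x > (0 : ℝ), 0 < v' x)
    (hHJB : ∀ x > (0 : ℝ), β * v x =
      (1 / 2) * σ ^ 2 * x ^ 2 * v'' x + (x ^ α - μ * x) * v' x
        + U (I (v' x)) - v' x * I (v' x))
    (φ₀ : ℝ) (hφ₀ : 0 < φ₀)
    (hvbound : ∀ x > (0 : ℝ), 0 ≤ v x ∧ v x ≤ x + φ₀)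
    (v0 : ℝ) (hv0 : Tendsto v (𝓝[>] 0) (𝓝 v0)) (hv0pos : 0 < v0) :
    Tendsto (fun x => x ^ α * v' x) (𝓝[>] 0) (𝓝 (β * v0)) ∧
      0 < β * v0 ∧
      Tendsto (fun x => I (v' x) / x ^ α) (𝓝[>] 0) (𝓝 0) := by
  have hσ2 : (0:ℝ) < σ ^ 2 := by positivity
  set Ut : ℝ → ℝ := fun p => U (I p) - p * I p with hUt
  clear_value Ut
  -- continuity of U'
  have hU'cont : ContinuousOn U' (Ioi 0) := fun y hy =>
    ((hU''deriv y hy).differentiableAt.continuousAt).continuousWithinAt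
  -- U' strictly antitone
  have hU'anti : StrictAntiOn U' (Ioi 0) := by
    apply strictAntiOn_of_deriv_neg (convex_Ioi 0) hU'cont
    intro y hy
    rw [interior_Ioi] at hy
    rw [(hU''deriv y hy).deriv]
    exact hU''neg y hy
  -- I antitone on positives
  have hIanti : ∀ p q : ℝ, 0 < p → p ≤ q → I q ≤ I p := by
    intro p q hp hpq
    by_contra h
    push_neg at h
    have := hU'anti (mem_Ioi.2 (hIpos p hp)) (mem_Ioi.2 (hIpos q (lt_of_lt_of_le hp hpq))) h
    rw [hIright p hp, hIright q (lt_of_lt_of_le hp hpq)] at this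
    linarith
  -- U tendsto at 0 from the right
  have hU0' : Tendsto U (𝓝[>] (0:ℝ)) (𝓝 0) := by
    have h := (hUcont 0 self_mem_Ici).tendsto
    rw [hU0] at h
    exact h.mono_left (nhdsWithin_mono _ Ioi_subset_Ici_self)
  -- c * U' c ≤ U c
  have hcU' : ∀ c > (0:ℝ), c * U' c ≤ U c := by
    intro c hc
    have key : ∀ y, 0 < y → y < c → U' c * (c - y) ≤ U c - U y := by
      intro y hy hyc
      obtain ⟨ξ, hξ, hξeq⟩ := exists_hasDerivAt_eq_slope U U' hyc
        (hUcont.mono (fun t ht => le_trans hy.le ht.1))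
        (fun t ht => hU'deriv t (hy.trans ht.1))
      have hξpos : 0 < ξ := hy.trans hξ.1
      have h1 : U' c ≤ U' ξ := le_of_lt (hU'anti (mem_Ioi.2 hξpos) (mem_Ioi.2 hc) hξ.2)
      have h2 : U' ξ * (c - y) = U c - U y := by
        rw [hξeq, div_mul_cancel₀ _ (sub_ne_zero.2 hyc.ne')]
      nlinarith [sub_pos.2 hyc]
    have hlim1 : Tendsto (fun y => U' c * (c - y)) (𝓝[>] (0:ℝ)) (𝓝 (U' c * c)) := by
      have : Tendsto (fun y : ℝ => U' c * (c - y)) (𝓝 (0:ℝ)) (𝓝 (U' c * (c - 0))) :=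
        (tendsto_const_nhds.sub tendsto_id).const_mul (U' c)
      rw [sub_zero] at this
      exact this.mono_left nhdsWithin_le_nhds
    have hlim2 : Tendsto (fun y => U c - U y) (𝓝[>] (0:ℝ)) (𝓝 (U c - 0)) :=
      tendsto_const_nhds.sub hU0'
    rw [sub_zero] at hlim2
    have := le_of_tendsto_of_tendsto hlim1 hlim2 ?_
    · linarith [this, mul_comm (U' c) c]
    · filter_upwards [Ioo_mem_nhdsGT_of_mem (left_mem_Ico.2 hc)] with y hy
      exact key y hy.1 hy.2
  -- Ut is nonnegative
  have hUtnn : ∀ p > (0:ℝ), 0 ≤ Ut p := by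
    intro p hp
    have h := hcU' (I p) (hIpos p hp)
    rw [hIright p hp] at h
    simp only [hUt]
    nlinarith [mul_comm (I p) p]
  -- Ut antitone + gradient inequality
  have hUtgrad : ∀ p q : ℝ, 0 < q → q ≤ p → Ut p ≤ Ut q ∧ Ut q - Ut p ≤ I q * (p - q) := by
    intro p q hq hqp
    rcases eq_or_lt_of_le hqp with rfl | hlt
    · exact ⟨le_refl _, by simp⟩
    have hp : 0 < p := hq.trans hlt
    have hapos : 0 < I p := hIpos p hp
    have hbpos : 0 < I q := hIpos q hq
    have hab : I p ≤ I q := hIanti q p hq hqp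
    have hab' : I p < I q := by
      rcases eq_or_lt_of_le hab with h | h
      · exfalso
        have h2 : U' (I p) = U' (I q) := by rw [h]
        rw [hIright p hp, hIright q hq] at h2
        linarith
      · exact h
    obtain ⟨ξ, hξ, hξeq⟩ := exists_hasDerivAt_eq_slope U U' hab'
      (hUcont.mono (fun t ht => le_trans hapos.le ht.1))
      (fun t ht => hU'deriv t (hapos.trans ht.1))
    have hξpos : 0 < ξ := hapos.trans hξ.1
    have hUba : U (I q) - U (I p) = U' ξ * (I q - I p) := by
      rw [hξeq, div_mul_cancel₀ _ (sub_ne_zero.2 hab'.ne')]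
    have hξle : U' ξ ≤ p := by
      have := hU'anti (mem_Ioi.2 hapos) (mem_Ioi.2 hξpos) hξ.1
      rw [hIright p hp] at this; exact this.le
    have hξge : q ≤ U' ξ := by
      have := hU'anti (mem_Ioi.2 hξpos) (mem_Ioi.2 hbpos) hξ.2
      rw [hIright q hq] at this; exact this.le
    constructor
    · simp only [hUt]
      nlinarith [mul_nonneg (sub_nonneg.2 hξge) (sub_nonneg.2 hab),
        mul_nonneg hapos.le (sub_nonneg.2 hqp)]
    · simp only [hUt]
      nlinarith [mul_nonneg (sub_nonneg.2 hξle) (sub_nonneg.2 hab)]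
  -- I tends to 0⁺ at ∞
  have hItop : Tendsto I atTop (𝓝[>] (0:ℝ)) := by
    rw [tendsto_nhdsWithin_iff]
    constructor
    · rw [tendsto_order]
      constructor
      · intro a ha
        filter_upwards [eventually_gt_atTop 0] with p hp
        exact ha.trans (hIpos p hp)
      · intro b hb
        have hb2 : (0:ℝ) < b/2 := by linarith
        filter_upwards [eventually_gt_atTop (U' (b/2))] with p hp
        by_contra h
        push_neg at h
        have hppos : 0 < p := (hU'pos (b/2) hb2).trans hp
        have hlt : b/2 < I p := by linarith
        have := hU'anti (mem_Ioi.2 hb2) (mem_Ioi.2 (hIpos p hppos)) hlt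
        rw [hIright p hppos] at this
        linarith
    · filter_upwards [eventually_gt_atTop 0] with p hp
      exact hIpos p hp
  have hUIp : Tendsto (fun p => U (I p)) atTop (𝓝 0) := hU0'.comp hItop
  have hpIp : Tendsto (fun p => p * I p) atTop (𝓝 0) := by
    apply tendsto_of_tendsto_of_tendsto_of_le_of_le' tendsto_const_nhds hUIp
    · filter_upwards [eventually_gt_atTop 0] with p hp
      exact mul_nonneg hp.le (hIpos p hp).le
    · filter_upwards [eventually_gt_atTop 0] with p hp
      have h := hcU' (I p) (hIpos p hp)
      rw [hIright p hp] at h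
      nlinarith [mul_comm (I p) p]
  have hUttop : Tendsto Ut atTop (𝓝 0) := by
    rw [hUt]
    have := hUIp.sub hpIp
    simpa using this
  -- v' is antitone
  have hv'anti : AntitoneOn v' (Ioi 0) := by
    have h := hconc.antitoneOn_deriv (fun x hx => (hv'deriv x hx).differentiableAt)
    intro x hx y hy hxy
    have h2 := h hx hy hxy
    rwa [(hv'deriv x hx).deriv, (hv'deriv y hy).deriv] at h2
  have hv''np : ∀ x > (0:ℝ), v'' x ≤ 0 := fun x hx =>
    aux_deriv_nonpos_of_antitone hx hv'anti (hv''deriv x hx)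
  -- HJB rearranged
  have hHJB' : ∀ x > (0:ℝ), (1/2) * σ^2 * x^2 * v'' x
      = β * v x - (x ^ α - μ * x) * v' x - Ut (v' x) := by
    intro x hx
    have h := hHJB x hx
    simp only [hUt]
    linarith
  have hineqF : ∀ x > (0:ℝ), β * v x + μ * (x * v' x) - Ut (v' x) ≤ x ^ α * v' x := by
    intro x hx
    have h1 := hHJB' x hx
    have h2 := hv''np x hx
    have h3 : (0:ℝ) ≤ (1/2) * σ^2 * x^2 := by positivity
    have h4 : (1/2) * σ^2 * x^2 * v'' x ≤ 0 := mul_nonpos_of_nonneg_of_nonpos h3 h2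
    have hexp : (x ^ α - μ * x) * v' x = x ^ α * v' x - μ * (x * v' x) := by ring
    linarith
  -- MVT for v
  have hMVTv : ∀ y x : ℝ, 0 < y → y < x → ∃ ξ, ξ ∈ Ioo y x ∧ v x - v y = v' ξ * (x - y) := by
    intro y x hy hyx
    obtain ⟨ξ, hξ, hξeq⟩ := exists_hasDerivAt_eq_slope v v' hyx
      (fun t ht => ((hv'deriv t (hy.trans_le ht.1)).continuousAt).continuousWithinAt)
      (fun t ht => hv'deriv t (hy.trans ht.1))
    refine ⟨ξ, hξ, ?_⟩
    rw [hξeq, div_mul_cancel₀ _ (sub_ne_zero.2 hyx.ne')]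
  have hv0le : ∀ x > (0:ℝ), v0 ≤ v x := by
    intro x hx
    refine le_of_tendsto hv0 ?_
    filter_upwards [Ioo_mem_nhdsGT_of_mem (left_mem_Ico.2 hx)] with y hy
    obtain ⟨ξ, hξ, heq⟩ := hMVTv y x hy.1 hy.2
    nlinarith [hv'pos ξ (hy.1.trans hξ.1), sub_pos.2 hy.2]
  -- x * v' x → 0
  have hxw0 : Tendsto (fun x => x * v' x) (𝓝[>] (0:ℝ)) (𝓝 0) := by
    have hub : ∀ x > (0:ℝ), x * v' x ≤ 2 * (v x - v (x/2)) := by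
      intro x hx
      have hx2 : 0 < x/2 := by linarith
      obtain ⟨ξ, hξ, heq⟩ := hMVTv (x/2) x hx2 (by linarith)
      have hle : v' x ≤ v' ξ := hv'anti (mem_Ioi.2 (hx2.trans hξ.1)) (mem_Ioi.2 hx) hξ.2.le
      calc x * v' x ≤ x * v' ξ := mul_le_mul_of_nonneg_left hle hx.le
        _ = 2 * (v' ξ * (x - x/2)) := by ring
        _ = 2 * (v x - v (x/2)) := by rw [← heq]
    have hhalf : Tendsto (fun x : ℝ => x/2) (𝓝[>] (0:ℝ)) (𝓝[>] (0:ℝ)) := by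
      rw [tendsto_nhdsWithin_iff]
      constructor
      · have h : Tendsto (fun x:ℝ => x/2) (𝓝 (0:ℝ)) (𝓝 ((0:ℝ)/2)) := tendsto_id.div_const 2
        rw [zero_div] at h
        exact h.mono_left nhdsWithin_le_nhds
      · filter_upwards [self_mem_nhdsWithin] with x hx
        exact half_pos (show (0:ℝ) < x from hx)
    have h2 : Tendsto (fun x => 2 * (v x - v (x/2))) (𝓝[>] (0:ℝ)) (𝓝 (2 * (v0 - v0))) :=
      (hv0.sub (hv0.comp hhalf)).const_mul 2
    rw [sub_self, mul_zero] at h2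
    apply tendsto_of_tendsto_of_tendsto_of_le_of_le' tendsto_const_nhds h2
    · filter_upwards [self_mem_nhdsWithin] with x hx
      exact mul_nonneg (le_of_lt hx) (hv'pos x hx).le
    · filter_upwards [self_mem_nhdsWithin] with x hx
      exact hub x hx
  -- x^α → 0 as x → 0⁺
  have hrpow0 : Tendsto (fun x:ℝ => x ^ α) (𝓝[>] (0:ℝ)) (𝓝 0) := by
    have h := (Real.continuousAt_rpow_const 0 α (Or.inr hα0.le)).tendsto
    rw [Real.zero_rpow hα0.ne'] at h
    exact h.mono_left nhdsWithin_le_nhds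

  -- Step A : v' tends to infinity at 0+
  have hwtop : Tendsto v' (𝓝[>] (0:ℝ)) atTop := by
    have hkey : ∀ C : ℝ, ∃ x, 0 < x ∧ C ≤ v' x := by
      by_contra hCc
      push_neg at hCc
      obtain ⟨C, hC⟩ := hCc
      have hbdd : BddAbove (v' '' Ioi 0) := by
        refine ⟨C, ?_⟩
        rintro t ⟨x, hx, rfl⟩
        exact (hC x hx).le
      set L := sSup (v' '' Ioi 0) with hLdef
      have hwL : Tendsto v' (𝓝[>] (0:ℝ)) (𝓝 L) := hv'anti.tendsto_nhdsGT hbdd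
      have hLle : ∀ x, 0 < x → v' x ≤ L := fun x hx => le_csSup hbdd ⟨x, hx, rfl⟩
      clear_value L
      have hm : 0 < v' 1 := hv'pos 1 one_pos
      have hLpos : 0 < L := hm.trans_le (hLle 1 one_pos)
      have hvle : ∀ x, 0 < x → v x ≤ v0 + L * x := by
        intro x hx
        have htd : Tendsto (fun y => v y + L * x) (𝓝[>] (0:ℝ)) (𝓝 (v0 + L * x)) :=
          hv0.add tendsto_const_nhds
        refine ge_of_tendsto htd ?_
        filter_upwards [Ioo_mem_nhdsGT_of_mem (left_mem_Ico.2 hx)] with y hy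
        obtain ⟨ξ, hξ, heq⟩ := hMVTv y x hy.1 hy.2
        have h1 : v' ξ ≤ L := hLle ξ (hy.1.trans hξ.1)
        nlinarith [mul_le_mul_of_nonneg_right h1 (sub_nonneg.2 hy.2.le), mul_pos hLpos hy.1]
      have hUtL : β * v0 ≤ Ut L := by
        have htd : Tendsto (fun x => β * v0 - x ^ α * L - I (v' 1) * (L - v' x))
            (𝓝[>] (0:ℝ)) (𝓝 (β * v0 - 0 * L - I (v' 1) * (L - L))) :=
          (tendsto_const_nhds.sub (hrpow0.mul_const L)).sub
            ((tendsto_const_nhds.sub hwL).const_mul (I (v' 1)))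
        rw [sub_self, mul_zero, zero_mul, sub_zero, sub_zero] at htd
        refine le_of_tendsto htd ?_
        filter_upwards [Ioc_mem_nhdsGT_of_mem (left_mem_Ico.2 one_pos)] with x hx
        have hxp : 0 < x := hx.1
        have hwx := hv'pos x hxp
        have h1 := hineqF x hxp
        have h2 : Ut (v' x) - Ut L ≤ I (v' x) * (L - v' x) :=
          (hUtgrad L (v' x) hwx (hLle x hxp)).2
        have h3 : I (v' x) ≤ I (v' 1) := hIanti (v' 1) (v' x) hm
          (hv'anti (mem_Ioi.2 hxp) (mem_Ioi.2 one_pos) hx.2)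
        have h4 : x ^ α * v' x ≤ x ^ α * L :=
          mul_le_mul_of_nonneg_left (hLle x hxp) (Real.rpow_nonneg hxp.le α)
        have h5 : β * v0 ≤ β * v x := mul_le_mul_of_nonneg_left (hv0le x hxp) hβ.le
        have h6 : 0 ≤ μ * (x * v' x) := mul_nonneg hμ.le (mul_nonneg hxp.le hwx.le)
        have h7 : 0 ≤ L - v' x := sub_nonneg.2 (hLle x hxp)
        have h8 := mul_le_mul_of_nonneg_right h3 h7
        linarith
      have hxpow : ∀ z : ℝ, 0 < z → z ^ α = z ^ (α - 2) * z ^ 2 := by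
        intro z hz
        rw [← Real.rpow_natCast z 2, ← Real.rpow_add hz]
        norm_num
      have hdb : ∀ x, 0 < x → x < 1 → v'' x ≤
          (2 * v' 1 / σ ^ 2)/(1-α) * ((α-1) * x ^ (α-1-1)) + (2 * (μ+β) * L / σ ^ 2) * x⁻¹ := by
        intro x hx hx1
        have hb1 : (1/2) * σ^2 * x^2 * v'' x ≤ (β+μ) * L * x - v' 1 * x ^ α := by
          have h := hHJB' x hx
          have e2 : v' 1 ≤ v' x := hv'anti (mem_Ioi.2 hx) (mem_Ioi.2 one_pos) hx1.le
          have e3 : x ^ α * v' 1 ≤ x ^ α * v' x :=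
            mul_le_mul_of_nonneg_left e2 (Real.rpow_nonneg hx.le α)
          have e4 : x * v' x ≤ x * L := mul_le_mul_of_nonneg_left (hLle x hx) hx.le
          have e5 : β * v x ≤ β * (v0 + L * x) := mul_le_mul_of_nonneg_left (hvle x hx) hβ.le
          have e6 : β * v0 ≤ Ut (v' x) :=
            le_trans hUtL (hUtgrad L (v' x) (hv'pos x hx) (hLle x hx)).1
          have hexp : (x ^ α - μ * x) * v' x = x ^ α * v' x - μ * (x * v' x) := by ring
          nlinarith [mul_le_mul_of_nonneg_left e4 hμ.le]
        have hgid : (2 * v' 1 / σ ^ 2)/(1-α) * ((α-1) * x ^ (α-1-1))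
            + (2 * (μ+β) * L / σ ^ 2) * x⁻¹
            = ((β+μ) * L * x - v' 1 * x ^ α) * (2/(σ^2 * x^2)) := by
          have h12 : α - 1 - 1 = α - 2 := by ring
          rw [h12, hxpow x hx]
          have h1a : (1:ℝ) - α ≠ 0 := by linarith
          field_simp
          ring
        rw [hgid]
        calc v'' x = ((1/2) * σ^2 * x^2 * v'' x) * (2/(σ^2 * x^2)) := by
              field_simp [hσ.ne', hx.ne']
            _ ≤ ((β+μ) * L * x - v' 1 * x ^ α) * (2/(σ^2 * x^2)) :=
              mul_le_mul_of_nonneg_right hb1 (by positivity)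
      have hcomp := aux_mono_comp one_pos (fun x hx => hv''deriv x hx)
        (fun x hx => ((Real.hasDerivAt_rpow_const (Or.inl hx.ne')).const_mul
            ((2 * v' 1 / σ ^ 2)/(1-α))).add
          ((Real.hasDerivAt_log hx.ne').const_mul (2 * (μ+β) * L / σ ^ 2)))
        hdb
      have hApos : 0 < (2 * v' 1 / σ ^ 2)/(1-α) :=
        div_pos (div_pos (by linarith) hσ2) (by linarith)
      have haux := aux_rpow_log_atTop (B := 2 * (μ+β) * L / σ ^ 2) hApos hα1
      obtain ⟨x, hgx, hxIoc⟩ := ((haux.eventually (eventually_gt_atTop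
          (L - v' 1 + ((2 * v' 1 / σ ^ 2)/(1-α) * (1:ℝ) ^ (α-1)
            + (2 * (μ+β) * L / σ ^ 2) * Real.log 1)))).and
        (Ioc_mem_nhdsGT_of_mem (left_mem_Ico.2 one_pos))).exists
      have h1 : (2 * v' 1 / σ ^ 2)/(1-α) * x ^ (α-1) + (2 * (μ+β) * L / σ ^ 2) * Real.log x
          - ((2 * v' 1 / σ ^ 2)/(1-α) * (1:ℝ) ^ (α-1) + (2 * (μ+β) * L / σ ^ 2) * Real.log 1)
          ≤ v' x - v' 1 := hcomp x hxIoc.1 hxIoc.2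
      have hgx' : L - v' 1 + ((2 * v' 1 / σ ^ 2)/(1-α) * (1:ℝ) ^ (α-1)
          + (2 * (μ+β) * L / σ ^ 2) * Real.log 1)
          < (2 * v' 1 / σ ^ 2)/(1-α) * x ^ (α-1) + (2 * (μ+β) * L / σ ^ 2) * Real.log x := hgx
      have h2 := hLle x hxIoc.1
      linarith
    rw [tendsto_atTop]
    intro C
    obtain ⟨x, hx, hCx⟩ := hkey C
    filter_upwards [Ioo_mem_nhdsGT_of_mem (left_mem_Ico.2 hx)] with t ht
    exact hCx.trans (hv'anti (mem_Ioi.2 ht.1) (mem_Ioi.2 hx) ht.2.le)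

  -- limits along v'
  have hUtw : Tendsto (fun x => Ut (v' x)) (𝓝[>] (0:ℝ)) (𝓝 0) := hUttop.comp hwtop
  have hwIw : Tendsto (fun x => v' x * I (v' x)) (𝓝[>] (0:ℝ)) (𝓝 0) := hpIp.comp hwtop
  have hE : Tendsto (fun x => β * v x + μ * (x * v' x) - Ut (v' x)) (𝓝[>] (0:ℝ))
      (𝓝 (β * v0 + μ * 0 - 0)) := ((hv0.const_mul β).add (hxw0.const_mul μ)).sub hUtw
  rw [mul_zero, add_zero, sub_zero] at hE
  have hxpow : ∀ z : ℝ, 0 < z → z ^ α = z ^ (α - 2) * z ^ 2 := by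
    intro z hz
    rw [← Real.rpow_natCast z 2, ← Real.rpow_add hz]
    norm_num
  have hrpow1 : Tendsto (fun x:ℝ => x ^ (1-α)) (𝓝[>] (0:ℝ)) (𝓝 0) := by
    have h := (Real.continuousAt_rpow_const 0 (1-α) (Or.inr (by linarith))).tendsto
    rw [Real.zero_rpow (by linarith : (1:ℝ) - α ≠ 0)] at h
    exact h.mono_left nhdsWithin_le_nhds
  -- the upper bound
  have hupper : ∀ η : ℝ, 0 < η → ∀ᶠ x in 𝓝[>] (0:ℝ), x ^ α * v' x < β * v0 + η := by
    intro η hη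
    have hD : Tendsto
        (fun x => σ^2/2 * α * (x * v' x) + (β * v x + μ * (x * v' x) - Ut (v' x)))
        (𝓝[>] (0:ℝ)) (𝓝 (σ^2/2 * α * 0 + β * v0)) := (hxw0.const_mul (σ^2/2 * α)).add hE
    rw [mul_zero, zero_add] at hD
    obtain ⟨x₁, hx₁pos, hx₁sub⟩ := mem_nhdsGT_iff_exists_Ioc_subset.1
      (hD.eventually_lt_const (show β * v0 < β * v0 + η/2 by linarith))
    filter_upwards [Ioc_mem_nhdsGT_of_mem (left_mem_Ico.2 hx₁pos)] with x hx
    by_contra hFx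
    push_neg at hFx
    have hxp : 0 < x := hx.1
    have hFd : ∀ z, 0 < z → HasDerivAt (fun y => y ^ α * v' y)
        (α * z ^ (α-1) * v' z + z ^ α * v'' z) z := by
      intro z hz
      have h := (Real.hasDerivAt_rpow_const (x := z) (p := α) (Or.inl hz.ne')).mul
        (hv''deriv z hz)
      exact h
      try ring
    have hF'le : ∀ z, 0 < z → z ≤ x → β * v0 + η ≤ z ^ α * v' z →
        α * z ^ (α-1) * v' z + z ^ α * v'' z ≤ -(η/σ^2) * z ^ (α-2) := by
      intro z hz hzx hTz
      have hza : z^2 * z^(α-1) = z ^ α * z := by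
        have h1 : (z:ℝ)^2 = z^((2:ℕ):ℝ) := (Real.rpow_natCast z 2).symm
        have h2 : z ^ α * z = z ^ α * z^((1:ℕ):ℝ) := by
          rw [Real.rpow_natCast, pow_one]
        rw [h1, h2, ← Real.rpow_add hz, ← Real.rpow_add hz]
        congr 1
        push_cast
        ring
      have hid : (1/2)*σ^2*z^2*(α * z ^ (α-1) * v' z + z ^ α * v'' z)
          = z ^ α * ((1/2)*σ^2*α*(z*v' z) + (β*v z - (z ^ α - μ*z)*v' z - Ut (v' z))) := by
        linear_combination ((1/2)*σ^2*α*(v' z))*hza + (z ^ α) * (hHJB' z hz)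
      have hDz : σ^2/2 * α * (z * v' z) + (β * v z + μ * (z * v' z) - Ut (v' z))
          < β * v0 + η/2 := hx₁sub ⟨hz, hzx.trans hx.2⟩
      have hzα : (0:ℝ) < z ^ α := Real.rpow_pos_of_pos hz α
      have hbr : (1/2)*σ^2*α*(z*v' z) + (β*v z - (z ^ α - μ*z)*v' z - Ut (v' z)) ≤ -(η/2) := by
        have hexp : (z ^ α - μ * z) * v' z = z ^ α * v' z - μ * (z * v' z) := by ring
        linarith
      have key : (1/2)*σ^2*z^2*(α * z ^ (α-1) * v' z + z ^ α * v'' z) ≤ z ^ α * (-(η/2)) := by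
        rw [hid]
        exact mul_le_mul_of_nonneg_left hbr hzα.le
      have hrw : -(η/σ^2) * z ^ (α-2) = (z ^ α * (-(η/2))) * (2/(σ^2*z^2)) := by
        rw [hxpow z hz]
        field_simp
      calc α * z ^ (α-1) * v' z + z ^ α * v'' z
          = ((1/2)*σ^2*z^2*(α * z ^ (α-1) * v' z + z ^ α * v'' z)) * (2/(σ^2*z^2)) := by
            field_simp
            try ring
        _ ≤ (z ^ α * (-(η/2))) * (2/(σ^2*z^2)) :=
            mul_le_mul_of_nonneg_right key (by positivity)
        _ = -(η/σ^2) * z ^ (α-2) := hrw.symm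
    have hneg : ∀ z, 0 < z → z ≤ x → β * v0 + η ≤ z ^ α * v' z →
        α * z ^ (α-1) * v' z + z ^ α * v'' z < 0 := by
      intro z hz hzx hTz
      refine lt_of_le_of_lt (hF'le z hz hzx hTz) ?_
      have h1 : (0:ℝ) < (η/σ^2) * z ^ (α-2) :=
        mul_pos (div_pos hη hσ2) (Real.rpow_pos_of_pos hz _)
      linarith
    have hstay : ∀ z, 0 < z → z ≤ x → β * v0 + η ≤ z ^ α * v' z :=
      aux_stay_above (F := fun y => y ^ α * v' y)
        (F' := fun z => α * z ^ (α-1) * v' z + z ^ α * v'' z) hxp hFd hneg hFx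
    have hcomp := aux_mono_comp (b := x) hxp hFd
      (fun z hz => (Real.hasDerivAt_rpow_const (x := z) (p := α - 1)
        (Or.inl hz.ne')).const_mul ((η/σ^2)/(1-α)))
      (by
        intro z hz hzx
        have h := hF'le z hz hzx.le (hstay z hz hzx.le)
        refine h.trans (le_of_eq ?_)
        rw [show α - 1 - 1 = α - 2 by ring]
        have h1a : (1:ℝ) - α ≠ 0 := by linarith
        field_simp
        ring)
    have hKpos : 0 < (η/σ^2)/(1-α) := div_pos (div_pos hη hσ2) (by linarith)
    have heven : ∀ᶠ z in 𝓝[>] (0:ℝ),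
        (η/σ^2)/(1-α) - z^(1-α) * ((η/σ^2)/(1-α) * x^(α-1)) + z^(1-α) * (x^α * v' x)
          ≤ z * v' z := by
      filter_upwards [Ioc_mem_nhdsGT_of_mem (left_mem_Ico.2 hxp)] with z hz
      have h1 : (η/σ^2)/(1-α) * z^(α-1) - (η/σ^2)/(1-α) * x^(α-1)
          ≤ z^α * v' z - x^α * v' x := hcomp z hz.1 hz.2
      have h2 := mul_le_mul_of_nonneg_left h1 (Real.rpow_nonneg hz.1.le (1-α))
      have e1 : z^(1-α) * z^(α-1) = 1 := by
        rw [← Real.rpow_add hz.1]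
        norm_num
      have e2 : z^(1-α) * z^α = z := by
        rw [← Real.rpow_add hz.1, show (1:ℝ)-α+α = 1 by ring, Real.rpow_one]
      have lhs_eq : z^(1-α) * ((η/σ^2)/(1-α) * z^(α-1) - (η/σ^2)/(1-α) * x^(α-1))
          = (η/σ^2)/(1-α) - z^(1-α) * ((η/σ^2)/(1-α) * x^(α-1)) := by
        calc z^(1-α) * ((η/σ^2)/(1-α) * z^(α-1) - (η/σ^2)/(1-α) * x^(α-1))
            = (η/σ^2)/(1-α) * (z^(1-α) * z^(α-1))
              - z^(1-α) * ((η/σ^2)/(1-α) * x^(α-1)) := by ring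
          _ = _ := by rw [e1, mul_one]
      have rhs_eq : z^(1-α) * (z^α * v' z - x^α * v' x)
          = z * v' z - z^(1-α) * (x^α * v' x) := by
        calc z^(1-α) * (z^α * v' z - x^α * v' x)
            = (z^(1-α) * z^α) * v' z - z^(1-α) * (x^α * v' x) := by ring
          _ = _ := by rw [e2]
      rw [lhs_eq, rhs_eq] at h2
      linarith
    have htendB : Tendsto (fun z : ℝ =>
        (η/σ^2)/(1-α) - z^(1-α) * ((η/σ^2)/(1-α) * x^(α-1)) + z^(1-α) * (x^α * v' x))
        (𝓝[>] (0:ℝ))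
        (𝓝 ((η/σ^2)/(1-α) - 0 * ((η/σ^2)/(1-α) * x^(α-1)) + 0 * (x^α * v' x))) :=
      (tendsto_const_nhds.sub (hrpow1.mul_const _)).add (hrpow1.mul_const _)
    rw [zero_mul, zero_mul, sub_zero, add_zero] at htendB
    have hcontr := le_of_tendsto_of_tendsto htendB hxw0 heven
    linarith
  -- the limit of x^α v'
  have hFlim : Tendsto (fun x => x ^ α * v' x) (𝓝[>] (0:ℝ)) (𝓝 (β * v0)) := by
    rw [tendsto_order]
    constructor
    · intro a ha
      filter_upwards [hE.eventually_const_lt ha, self_mem_nhdsWithin] with x h1 h2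
      exact h1.trans_le (hineqF x h2)
    · intro b hb
      filter_upwards [hupper (b - β * v0) (by linarith)] with x h1
      linarith
  refine ⟨hFlim, mul_pos hβ hv0pos, ?_⟩
  have hq : Tendsto (fun x => (v' x * I (v' x)) / (x ^ α * v' x)) (𝓝[>] (0:ℝ))
      (𝓝 (0 / (β * v0))) := hwIw.div hFlim (ne_of_gt (mul_pos hβ hv0pos))
  rw [zero_div] at hq
  refine Tendsto.congr' ?_ hq
  filter_upwards [self_mem_nhdsWithin] with x hx
  have hwx : v' x ≠ 0 := (hv'pos x hx).ne'
  rw [mul_comm (x ^ α) (v' x), mul_div_mul_left _ _ hwx]
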